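/- arXiv:2210.00991 — 3 statements merged into one kernel-verified Lean document; each statement's English description precedes it below -/
import Mathlib

section
/- (Gradient of the occupancy measure) For a policy π_θ differentiably parameterized by θ ∈ ℝ^d, the gradient of the occupancy measure satisfies ∇_θ μ^{π_θ}(s,a) = Σ_{s',a'} μ^{π_θ}(s') β^{π_θ}(s',a',s,a) ∇_θ π_θ(a'|s'), where μ^{π_θ}(s') = Σ_a μ^{π_θ}(s',a) and β^{π_θ}(s',a',s,a) = Σ_k γ^k P(s_k=s,a_k=a | s_0=s',a_0=a'). -/
open scoped BigOperators

noncomputable section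

/-- `betaK P pol k s a s' a'` is the probability of being at state-action `(s',a')`
after exactly `k` steps starting from `(s,a)` under policy `pol`. -/
def betaK {S A : Type*} [Fintype S] [Fintype A] [DecidableEq S] [DecidableEq A]
    (P : S → A → S → ℝ) (pol : S → A → ℝ) : ℕ → S → A → S → A → ℝ
  | 0 => fun s a s' a' => if s = s' ∧ a = a' then 1 else 0
  | k + 1 => fun s a s' a' =>
      ∑ s'', ∑ a'', P s a s'' * pol s'' a'' * betaK P pol k s'' a'' s' a'

/-- Discounted transition kernel `β^π(s,a,s',a') = ∑_k γ^k β^π_k(s,a,s',a')`. -/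
def betaDisc {S A : Type*} [Fintype S] [Fintype A] [DecidableEq S] [DecidableEq A]
    (P : S → A → S → ℝ) (pol : S → A → ℝ) (γ : ℝ) (s : S) (a : A) (s' : S) (a' : A) : ℝ :=
  ∑' k : ℕ, γ ^ k * betaK P pol k s a s' a'

/-- Q-value function `Q^π_R(s,a) = ∑_n γ^n E[R(s_n,a_n) | s_0=s, a_0=a]`. -/
def Qval {S A : Type*} [Fintype S] [Fintype A] [DecidableEq S] [DecidableEq A]
    (P : S → A → S → ℝ) (pol : S → A → ℝ) (γ : ℝ) (R : S → A → ℝ) (s : S) (a : A) : ℝ :=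
  ∑' n : ℕ, γ ^ n * ∑ s', ∑ a', betaK P pol n s a s' a' * R s' a'

def stepDist {S A : Type*} [Fintype S] [Fintype A]
    (P : S → A → S → ℝ) (pol : S → A → ℝ) (q : S → ℝ) : ℕ → S → A → ℝ
  | 0 => fun s a => q s * pol s a
  | n + 1 => fun s' a' => (∑ s, ∑ a, stepDist P pol q n s a * P s a s') * pol s' a'
def occ {S A : Type*} [Fintype S] [Fintype A]
    (P : S → A → S → ℝ) (pol : S → A → ℝ) (q : S → ℝ) (γ : ℝ) (s : S) (a : A) : ℝ :=
  ∑' n : ℕ, γ ^ n * stepDist P pol q n s a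

section aux
variable {S A : Type*} [Fintype S] [Fintype A] [DecidableEq S] [DecidableEq A]

attribute [local instance] Matrix.linftyOpNormedRing Matrix.linftyOpNormedAlgebra

local instance : CompleteSpace (Matrix (S × A) (S × A) ℝ) := FiniteDimensional.complete ℝ _

def Bmat (P : S → A → S → ℝ) (pol : S → A → ℝ) (γ : ℝ) : Matrix (S × A) (S × A) ℝ :=
  fun p p' => γ * (P p.1 p.2 p'.1 * pol p'.1 p'.2)

lemma Bmat_pow (P : S → A → S → ℝ) (pol : S → A → ℝ) (γ : ℝ) :
    ∀ (k : ℕ) (p p' : S × A),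
      (Bmat P pol γ ^ k) p p' = γ ^ k * betaK P pol k p.1 p.2 p'.1 p'.2 := by
  intro k
  induction k with
  | zero =>
    intro p p'
    simp [betaK, Matrix.one_apply, Prod.ext_iff]
  | succ k ih =>
    intro p p'
    rw [pow_succ', Matrix.mul_apply, Fintype.sum_prod_type]
    show ∑ s'', ∑ a'', Bmat P pol γ p (s'', a'') * (Bmat P pol γ ^ k) (s'', a'') p' = _
    simp only [ih]
    show _ = γ ^ (k+1) * ∑ s'', ∑ a'', P p.1 p.2 s'' * pol s'' a'' * betaK P pol k s'' a'' p'.1 p'.2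
    rw [Finset.mul_sum]
    refine Finset.sum_congr rfl fun s'' _ => ?_
    rw [Finset.mul_sum]
    refine Finset.sum_congr rfl fun a'' _ => ?_
    simp only [Bmat]
    ring

lemma stepDist_eq (P : S → A → S → ℝ) (pol : S → A → ℝ) (q : S → ℝ) (γ : ℝ) :
    ∀ (n : ℕ) (p : S × A),
      γ ^ n * stepDist P pol q n p.1 p.2 =
        ∑ p0 : S × A, (q p0.1 * pol p0.1 p0.2) * (Bmat P pol γ ^ n) p0 p := by
  intro n
  induction n with
  | zero =>
    intro p
    simp only [pow_zero, one_mul, Matrix.one_apply]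
    rw [Finset.sum_eq_single p]
    · simp [stepDist]
    · intro b _ hb; simp [hb]
    · simp
  | succ n ih =>
    intro p
    have h1 : γ ^ (n+1) * stepDist P pol q (n+1) p.1 p.2
        = ∑ p1 : S × A, (γ ^ n * stepDist P pol q n p1.1 p1.2) * Bmat P pol γ p1 p := by
      show γ ^ (n+1) * ((∑ s, ∑ a, stepDist P pol q n s a * P s a p.1) * pol p.1 p.2) = _
      rw [Fintype.sum_prod_type]
      simp only [Finset.mul_sum, Finset.sum_mul]
      refine Finset.sum_congr rfl fun s _ => Finset.sum_congr rfl fun a _ => ?_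
      simp only [Bmat]
      ring
    rw [h1]
    simp only [ih, Finset.sum_mul]
    rw [Finset.sum_comm]
    refine Finset.sum_congr rfl fun p0 _ => ?_
    have : ∀ p0 : S × A, (Bmat P pol γ ^ (n+1)) p0 p
        = ∑ p1 : S × A, (Bmat P pol γ ^ n) p0 p1 * Bmat P pol γ p1 p := by
      intro p0; rw [pow_succ, Matrix.mul_apply]
    rw [this p0, Finset.mul_sum]
    refine Finset.sum_congr rfl fun p1 _ => by ring

lemma Bmat_norm_le (P : S → A → S → ℝ) (pol : S → A → ℝ) (γ : ℝ)
    (hP : ∀ s a s', 0 ≤ P s a s') (hP1 : ∀ s a, ∑ s', P s a s' = 1)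
    (hpol : ∀ s a, 0 ≤ pol s a) (hpol1 : ∀ s, ∑ a, pol s a = 1)
    (hγ0 : 0 ≤ γ) : ‖Bmat P pol γ‖ ≤ γ := by
  rw [Matrix.linfty_opNorm_def]
  have : ((Finset.univ : Finset (S × A)).sup fun p => ∑ p', ‖Bmat P pol γ p p'‖₊) ≤ ⟨γ, hγ0⟩ := by
    refine Finset.sup_le fun p _ => ?_
    apply NNReal.coe_le_coe.mp
    push_cast
    have : ∀ p' : S × A, ‖Bmat P pol γ p p'‖ = Bmat P pol γ p p' := by
      intro p'
      rw [Real.norm_eq_abs, abs_of_nonneg]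
      exact mul_nonneg hγ0 (mul_nonneg (hP _ _ _) (hpol _ _))
    rw [Finset.sum_congr rfl fun p' _ => this p']
    have hrow : ∑ p' : S × A, Bmat P pol γ p p' = γ := by
      rw [Fintype.sum_prod_type]
      have h1 : ∀ s' : S, ∑ a', Bmat P pol γ p (s', a') = γ * P p.1 p.2 s' := by
        intro s'
        simp only [Bmat, ← Finset.mul_sum, ← Finset.mul_sum, hpol1, mul_one]
      rw [Finset.sum_congr rfl fun s' _ => h1 s', ← Finset.mul_sum, hP1, mul_one]
    exact le_of_eq hrow
  exact_mod_cast this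

/-- evaluation of a matrix entry, as a continuous linear map -/
def entryCLM (p p' : S × A) : Matrix (S × A) (S × A) ℝ →L[ℝ] ℝ :=
  LinearMap.toContinuousLinearMap
    { toFun := fun M => M p p'
      map_add' := fun _ _ => rfl
      map_smul' := fun _ _ => rfl }

@[simp] lemma entryCLM_apply (p p' : S × A) (M : Matrix (S × A) (S × A) ℝ) :
    entryCLM p p' M = M p p' := rfl

section inv
variable (P : S → A → S → ℝ) (pol : S → A → ℝ) (q : S → ℝ) (γ : ℝ)
variable (hP : ∀ s a s', 0 ≤ P s a s') (hP1 : ∀ s a, ∑ s', P s a s' = 1)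
variable (hpol : ∀ s a, 0 ≤ pol s a) (hpol1 : ∀ s, ∑ a, pol s a = 1)
variable (hγ0 : 0 ≤ γ) (hγ1 : γ < 1)

include hP hP1 hpol hpol1 hγ0 hγ1

lemma Bmat_norm_lt : ‖Bmat P pol γ‖ < 1 :=
  lt_of_le_of_lt (Bmat_norm_le P pol γ hP hP1 hpol hpol1 hγ0) hγ1

lemma Bmat_summable : Summable (fun k : ℕ => Bmat P pol γ ^ k) :=
  summable_geometric_of_norm_lt_one (Bmat_norm_lt P pol γ hP hP1 hpol hpol1 hγ0 hγ1)

lemma Bmat_tsum_eq :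
    ∑' k : ℕ, Bmat P pol γ ^ k = Ring.inverse (1 - Bmat P pol γ) :=
  geom_series_eq_inverse _ (Bmat_norm_lt P pol γ hP hP1 hpol hpol1 hγ0 hγ1)

lemma betaDisc_eq (p p' : S × A) :
    betaDisc P pol γ p.1 p.2 p'.1 p'.2 = Ring.inverse (1 - Bmat P pol γ) p p' := by
  have hs := Bmat_summable P pol γ hP hP1 hpol hpol1 hγ0 hγ1
  calc betaDisc P pol γ p.1 p.2 p'.1 p'.2
      = ∑' k : ℕ, entryCLM p p' (Bmat P pol γ ^ k) := by
        refine tsum_congr fun k => ?_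
        rw [entryCLM_apply, Bmat_pow]
    _ = entryCLM p p' (∑' k : ℕ, Bmat P pol γ ^ k) := ((entryCLM p p').map_tsum hs).symm
    _ = Ring.inverse (1 - Bmat P pol γ) p p' := by
        rw [Bmat_tsum_eq P pol γ hP hP1 hpol hpol1 hγ0 hγ1, entryCLM_apply]

lemma occ_eq (p : S × A) :
    occ P pol q γ p.1 p.2 =
      ∑ p0 : S × A, (q p0.1 * pol p0.1 p0.2) * Ring.inverse (1 - Bmat P pol γ) p0 p := by
  have hs := Bmat_summable P pol γ hP hP1 hpol hpol1 hγ0 hγ1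
  calc occ P pol q γ p.1 p.2
      = ∑' n : ℕ, ∑ p0 : S × A, (q p0.1 * pol p0.1 p0.2) * entryCLM p0 p (Bmat P pol γ ^ n) := by
        refine tsum_congr fun n => ?_
        simp only [entryCLM_apply]
        exact stepDist_eq P pol q γ n p
    _ = ∑ p0 : S × A, ∑' n : ℕ, (q p0.1 * pol p0.1 p0.2) * entryCLM p0 p (Bmat P pol γ ^ n) := by
        refine Summable.tsum_finsetSum fun p0 _ => ?_
        have hsum : Summable (fun n : ℕ => entryCLM p0 p (Bmat P pol γ ^ n)) :=
          hs.map (entryCLM p0 p).toLinearMap.toAddMonoidHom (entryCLM p0 p).continuous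
        exact hsum.mul_left _
    _ = ∑ p0 : S × A, (q p0.1 * pol p0.1 p0.2) * Ring.inverse (1 - Bmat P pol γ) p0 p := by
        refine Finset.sum_congr rfl fun p0 _ => ?_
        rw [tsum_mul_left, ← (entryCLM p0 p).map_tsum hs,
          Bmat_tsum_eq P pol γ hP hP1 hpol hpol1 hγ0 hγ1, entryCLM_apply]

lemma mu_eq (s' : S) :
    ∑ b, occ P pol q γ s' b
      = q s' + γ * ∑ p1 : S × A, occ P pol q γ p1.1 p1.2 * P p1.1 p1.2 s' := by
  have hlt := Bmat_norm_lt P pol γ hP hP1 hpol hpol1 hγ0 hγ1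
  set B := Bmat P pol γ with hB
  set C := Ring.inverse (1 - B) with hC
  have hinv : C * (1 - B) = 1 :=
    Ring.inverse_mul_cancel _ (isUnit_one_sub_of_norm_lt_one hlt)
  have hCeq : C = 1 + C * B := by
    have h2 : C - C * B = 1 := by rw [← hinv, mul_sub, mul_one]
    rw [sub_eq_iff_eq_add] at h2
    exact h2
  have key : ∀ b, ∑ p0 : S × A, (q p0.1 * pol p0.1 p0.2) * (C * B) p0 (s', b)
      = pol s' b * (γ * ∑ p1 : S × A, occ P pol q γ p1.1 p1.2 * P p1.1 p1.2 s') := by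
    intro b
    calc ∑ p0 : S × A, (q p0.1 * pol p0.1 p0.2) * (C * B) p0 (s', b)
        = ∑ p0 : S × A, ∑ p1 : S × A,
            (q p0.1 * pol p0.1 p0.2) * (C p0 p1 * B p1 (s', b)) := by
          refine Finset.sum_congr rfl fun p0 _ => ?_
          rw [Matrix.mul_apply, Finset.mul_sum]
      _ = ∑ p1 : S × A, (∑ p0 : S × A, (q p0.1 * pol p0.1 p0.2) * C p0 p1) * B p1 (s', b) := by
          rw [Finset.sum_comm]
          refine Finset.sum_congr rfl fun p1 _ => ?_
          rw [Finset.sum_mul]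
          exact Finset.sum_congr rfl fun p0 _ => by ring
      _ = ∑ p1 : S × A, occ P pol q γ p1.1 p1.2 * B p1 (s', b) := by
          refine Finset.sum_congr rfl fun p1 _ => ?_
          rw [← occ_eq P pol q γ hP hP1 hpol hpol1 hγ0 hγ1 p1]
      _ = pol s' b * (γ * ∑ p1 : S × A, occ P pol q γ p1.1 p1.2 * P p1.1 p1.2 s') := by
          rw [Finset.mul_sum, Finset.mul_sum]
          refine Finset.sum_congr rfl fun p1 _ => ?_
          show _ * (γ * (P p1.1 p1.2 s' * pol s' b)) = _
          ring
  calc ∑ b, occ P pol q γ s' b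
      = ∑ b, ∑ p0 : S × A, (q p0.1 * pol p0.1 p0.2) * C p0 (s', b) := by
        exact Finset.sum_congr rfl fun b _ =>
          occ_eq P pol q γ hP hP1 hpol hpol1 hγ0 hγ1 (s', b)
    _ = ∑ b, ((∑ p0 : S × A, (q p0.1 * pol p0.1 p0.2) * (1 : Matrix (S × A) (S × A) ℝ) p0 (s', b))
          + ∑ p0 : S × A, (q p0.1 * pol p0.1 p0.2) * (C * B) p0 (s', b)) := by
        refine Finset.sum_congr rfl fun b _ => ?_
        rw [← Finset.sum_add_distrib]
        refine Finset.sum_congr rfl fun p0 _ => ?_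
        rw [← mul_add, ← Matrix.add_apply, ← hCeq]
    _ = ∑ b, (q s' * pol s' b
          + pol s' b * (γ * ∑ p1 : S × A, occ P pol q γ p1.1 p1.2 * P p1.1 p1.2 s')) := by
        refine Finset.sum_congr rfl fun b _ => ?_
        rw [key b]
        congr 1
        simp [Matrix.one_apply, mul_ite]
    _ = q s' + γ * ∑ p1 : S × A, occ P pol q γ p1.1 p1.2 * P p1.1 p1.2 s' := by
        rw [Finset.sum_add_distrib, ← Finset.mul_sum, hpol1, mul_one, ← Finset.sum_mul, hpol1,
          one_mul]

end inv
end aux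


attribute [local instance] Matrix.linftyOpNormedRing Matrix.linftyOpNormedAlgebra

local instance occGradCompleteSpace {S A : Type*} [Fintype S] [Fintype A] [DecidableEq S]
    [DecidableEq A] : CompleteSpace (Matrix (S × A) (S × A) ℝ) :=
  FiniteDimensional.complete ℝ _

/-- Gradient of the occupancy measure with respect to the policy parameters:
`∇_θ μ^{π_θ}(s,a) = ∑_{s',a'} μ^{π_θ}(s') β^{π_θ}(s',a',s,a) ∇_θ π_θ(a'|s')`. -/
theorem occupancy_gradient {S A : Type*} [Fintype S] [Fintype A]
    [DecidableEq S] [DecidableEq A] {d : ℕ}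
    (P : S → A → S → ℝ) (q : S → ℝ) (γ : ℝ)
    (pol : (Fin d → ℝ) → S → A → ℝ) (θ : Fin d → ℝ)
    (hP : ∀ s a s', 0 ≤ P s a s') (hP1 : ∀ s a, ∑ s', P s a s' = 1)
    (hpol : ∀ θ' s a, 0 ≤ pol θ' s a) (hpol1 : ∀ θ' s, ∑ a, pol θ' s a = 1)
    (hq : ∀ s, 0 ≤ q s) (hq1 : ∑ s, q s = 1)
    (hγ0 : 0 ≤ γ) (hγ1 : γ < 1)
    (hdiff : ∀ s a, DifferentiableAt ℝ (fun θ' => pol θ' s a) θ) :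
    ∀ s a,
      fderiv ℝ (fun θ' => occ P (pol θ') q γ s a) θ =
        ∑ s', ∑ a',
          ((∑ b, occ P (pol θ) q γ s' b) * betaDisc P (pol θ) γ s' a' s a) •
            fderiv ℝ (fun θ' => pol θ' s' a') θ := by
  intro s a
  set p : S × A := (s, a) with hp
  set Dpol : S × A → ((Fin d → ℝ) →L[ℝ] ℝ) :=
    fun sa => fderiv ℝ (fun θ' => pol θ' sa.1 sa.2) θ with hDpol
  set K : S × A → Matrix (S × A) (S × A) ℝ :=
    (fun sa => fun p1 p2 => γ * (P p1.1 p1.2 p2.1 * if p2 = sa then 1 else 0)) with hK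
  -- generic entry formula for combinations of the `K` matrices
  have hKsum : ∀ (c : S × A → ℝ) (p1 p2 : S × A),
      (∑ sa : S × A, c sa • K sa) p1 p2 = γ * (P p1.1 p1.2 p2.1 * c p2) := by
    intro c p1 p2
    rw [Matrix.sum_apply]
    simp only [Matrix.smul_apply]
    simp only [hK, Matrix.smul_apply, Pi.smul_apply, smul_eq_mul, mul_ite, mul_one, mul_zero]
    rw [Finset.sum_eq_single p2]
    · rw [if_pos rfl]; ring
    · intro b _ hb
      rw [if_neg (Ne.symm hb)]
    · simp
  -- the matrix `B θ'` decomposes as a linear combination of the `K sa`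
  have hBdecomp : ∀ θ' : Fin d → ℝ,
      Bmat P (pol θ') γ = ∑ sa : S × A, pol θ' sa.1 sa.2 • K sa := by
    intro θ'
    ext p1 p2
    rw [hKsum (fun sa => pol θ' sa.1 sa.2) p1 p2]
    rfl
  -- derivative of `θ' ↦ B θ'`
  set B' : (Fin d → ℝ) →L[ℝ] Matrix (S × A) (S × A) ℝ :=
    ∑ sa : S × A, (Dpol sa).smulRight (K sa) with hB'
  have hBd : HasFDerivAt (fun θ' => Bmat P (pol θ') γ) B' θ := by
    have h : HasFDerivAt (fun θ' => ∑ sa : S × A, pol θ' sa.1 sa.2 • K sa) B' θ :=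
      HasFDerivAt.fun_sum fun sa _ =>
        ((hdiff sa.1 sa.2).hasFDerivAt.smul_const (K sa))
    have heq : (fun θ' => Bmat P (pol θ') γ)
        = fun θ' => ∑ sa : S × A, pol θ' sa.1 sa.2 • K sa := funext hBdecomp
    rw [heq]
    exact h
  have hB'app : ∀ (v : Fin d → ℝ) (p1 p2 : S × A),
      (B' v) p1 p2 = γ * (P p1.1 p1.2 p2.1 * (Dpol p2) v) := by
    intro v p1 p2
    have : B' v = ∑ sa : S × A, ((Dpol sa) v) • K sa := by
      rw [hB', ContinuousLinearMap.sum_apply]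
      exact Finset.sum_congr rfl fun sa _ => rfl
    rw [this, hKsum (fun sa => (Dpol sa) v) p1 p2]
  -- the unit `1 - B θ`
  have hlt : ‖Bmat P (pol θ) γ‖ < 1 :=
    Bmat_norm_lt P (pol θ) γ hP hP1 (hpol θ) (hpol1 θ) hγ0 hγ1
  set u : (Matrix (S × A) (S × A) ℝ)ˣ := Units.oneSub (Bmat P (pol θ) γ) hlt with hu
  set C : Matrix (S × A) (S × A) ℝ := Ring.inverse (1 - Bmat P (pol θ) γ) with hC
  have hCu : C = (↑u⁻¹ : Matrix (S × A) (S × A) ℝ) := NormedRing.inverse_one_sub _ hlt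
  -- derivative of `θ' ↦ Ring.inverse (1 - B θ')`
  set C' : (Fin d → ℝ) →L[ℝ] Matrix (S × A) (S × A) ℝ :=
    (-(ContinuousLinearMap.mulLeftRight ℝ _ (↑u⁻¹) (↑u⁻¹))).comp (-B') with hC'
  have hCd : HasFDerivAt (fun θ' => Ring.inverse (1 - Bmat P (pol θ') γ)) C' θ := by
    have hinner : HasFDerivAt (fun θ' => 1 - Bmat P (pol θ') γ) (-B') θ :=
      hBd.const_sub 1
    have houter := hasFDerivAt_ringInverse (𝕜 := ℝ) u
    have := houter.comp θ (by exact hinner)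
    exact this
  have hC'app : ∀ v : Fin d → ℝ, C' v = C * (B' v) * C := by
    intro v
    rw [hC', hCu]
    change -(((↑u⁻¹ : Matrix (S × A) (S × A) ℝ) * (-(B' v))) * (↑u⁻¹ : Matrix (S × A) (S × A) ℝ)) = _
    rw [mul_neg, neg_mul, neg_neg]
  -- rewrite the occupancy function via the matrix inverse
  have hoccfun : (fun θ' => occ P (pol θ') q γ s a)
      = fun θ' => ∑ p0 : S × A,
          (q p0.1 * pol θ' p0.1 p0.2) * Ring.inverse (1 - Bmat P (pol θ') γ) p0 p :=
    funext fun θ' => occ_eq P (pol θ') q γ hP hP1 (hpol θ') (hpol1 θ') hγ0 hγ1 p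
  -- derivative of the occupancy function
  set D : (Fin d → ℝ) →L[ℝ] ℝ :=
    ∑ p0 : S × A,
      ((q p0.1 * pol θ p0.1 p0.2) • ((entryCLM p0 p).comp C')
        + (entryCLM p0 p C) • (q p0.1 • Dpol p0)) with hD
  have hoccd : HasFDerivAt (fun θ' => occ P (pol θ') q γ s a) D θ := by
    rw [hoccfun, hD]
    refine HasFDerivAt.fun_sum fun p0 _ => ?_
    have h1 : HasFDerivAt (fun θ' => q p0.1 * pol θ' p0.1 p0.2) (q p0.1 • Dpol p0) θ :=
      (hdiff p0.1 p0.2).hasFDerivAt.const_mul (q p0.1)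
    have h2 : HasFDerivAt (fun θ' => entryCLM p0 p (Ring.inverse (1 - Bmat P (pol θ') γ)))
        ((entryCLM p0 p).comp C') θ :=
      (entryCLM p0 p).hasFDerivAt.comp θ hCd
    have := h1.mul h2
    exact this
  rw [hoccd.fderiv]
  -- now prove the linear maps are equal
  ext v
  rw [hD]
  simp only [ContinuousLinearMap.sum_apply, ContinuousLinearMap.add_apply,
    ContinuousLinearMap.smul_apply, ContinuousLinearMap.comp_apply, smul_eq_mul,
    entryCLM_apply]
  -- occupancy as a vector
  have hocc : ∀ p1 : S × A, occ P (pol θ) q γ p1.1 p1.2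
      = ∑ p0 : S × A, (q p0.1 * pol θ p0.1 p0.2) * C p0 p1 := fun p1 =>
    occ_eq P (pol θ) q γ hP hP1 (hpol θ) (hpol1 θ) hγ0 hγ1 p1
  -- first piece
  have hT1 : ∑ p0 : S × A, (q p0.1 * pol θ p0.1 p0.2) * (C' v) p0 p
      = ∑ p2 : S × A, ((γ * ∑ p1 : S × A,
          occ P (pol θ) q γ p1.1 p1.2 * P p1.1 p1.2 p2.1) * (Dpol p2) v) * C p2 p := by
    have hinner : ∀ p2 : S × A, ∑ p0 : S × A, (q p0.1 * pol θ p0.1 p0.2) * (C * B' v) p0 p2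
        = (γ * ∑ p1 : S × A, occ P (pol θ) q γ p1.1 p1.2 * P p1.1 p1.2 p2.1) * (Dpol p2) v := by
      intro p2
      calc ∑ p0 : S × A, (q p0.1 * pol θ p0.1 p0.2) * (C * B' v) p0 p2
          = ∑ p0 : S × A, ∑ p1 : S × A,
              (q p0.1 * pol θ p0.1 p0.2) * (C p0 p1 * (B' v) p1 p2) := by
            refine Finset.sum_congr rfl fun p0 _ => ?_
            rw [Matrix.mul_apply, Finset.mul_sum]
        _ = ∑ p1 : S × A, (∑ p0 : S × A, (q p0.1 * pol θ p0.1 p0.2) * C p0 p1)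
              * (B' v) p1 p2 := by
            rw [Finset.sum_comm]
            refine Finset.sum_congr rfl fun p1 _ => ?_
            rw [Finset.sum_mul]
            exact Finset.sum_congr rfl fun p0 _ => by ring
        _ = ∑ p1 : S × A, occ P (pol θ) q γ p1.1 p1.2
              * (γ * (P p1.1 p1.2 p2.1 * (Dpol p2) v)) := by
            refine Finset.sum_congr rfl fun p1 _ => ?_
            rw [← hocc p1, hB'app]
        _ = (γ * ∑ p1 : S × A, occ P (pol θ) q γ p1.1 p1.2 * P p1.1 p1.2 p2.1)
              * (Dpol p2) v := by
            rw [Finset.mul_sum, Finset.sum_mul]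
            exact Finset.sum_congr rfl fun p1 _ => by ring
    calc ∑ p0 : S × A, (q p0.1 * pol θ p0.1 p0.2) * (C' v) p0 p
        = ∑ p0 : S × A, ∑ p2 : S × A,
            (q p0.1 * pol θ p0.1 p0.2) * ((C * B' v) p0 p2 * C p2 p) := by
          refine Finset.sum_congr rfl fun p0 _ => ?_
          rw [hC'app, Matrix.mul_apply, Finset.mul_sum]
      _ = ∑ p2 : S × A, (∑ p0 : S × A, (q p0.1 * pol θ p0.1 p0.2) * (C * B' v) p0 p2)
            * C p2 p := by
          rw [Finset.sum_comm]
          refine Finset.sum_congr rfl fun p2 _ => ?_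
          rw [Finset.sum_mul]
          exact Finset.sum_congr rfl fun p0 _ => by ring
      _ = _ := by
          exact Finset.sum_congr rfl fun p2 _ => by rw [hinner p2]
  rw [Finset.sum_add_distrib, hT1]
  -- right-hand side
  have hbeta : ∀ p2 : S × A, betaDisc P (pol θ) γ p2.1 p2.2 s a = C p2 p :=
    fun p2 => betaDisc_eq P (pol θ) γ hP hP1 (hpol θ) (hpol1 θ) hγ0 hγ1 p2 p
  have hmu : ∀ s' : S, ∑ b, occ P (pol θ) q γ s' b
      = q s' + γ * ∑ p1 : S × A, occ P (pol θ) q γ p1.1 p1.2 * P p1.1 p1.2 s' :=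
    fun s' => mu_eq P (pol θ) q γ hP hP1 (hpol θ) (hpol1 θ) hγ0 hγ1 s'
  calc (∑ p2 : S × A, ((γ * ∑ p1 : S × A,
          occ P (pol θ) q γ p1.1 p1.2 * P p1.1 p1.2 p2.1) * (Dpol p2) v) * C p2 p)
        + ∑ p2 : S × A, C p2 p * (q p2.1 * (Dpol p2) v)
      = ∑ p2 : S × A, ((∑ b, occ P (pol θ) q γ p2.1 b) * C p2 p) * (Dpol p2) v := by
        rw [← Finset.sum_add_distrib]
        refine Finset.sum_congr rfl fun p2 _ => ?_
        rw [hmu p2.1]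
        ring
    _ = _ := by
        rw [Fintype.sum_prod_type (f := fun p2 : S × A =>
          ((∑ b, occ P (pol θ) q γ p2.1 b) * C p2 p) * (Dpol p2) v)]
        refine Finset.sum_congr rfl fun s' _ => Finset.sum_congr rfl fun a' _ => ?_
        rw [hbeta (s', a')]
end
end

section
/- (Policy Gradient Theorem for general utilities) Let f : ℝ^{S×A} → ℝ be differentiable and define the 'intrinsic reward' R_π = ∇f evaluated at μ^π. Then for a differentiably parameterized policy π_θ, the gradient of θ ↦ f(μ^{π_θ}) equals Σ_{s,a} μ^{π_θ}(s) Q^{π_θ}_{R_{π_θ}}(s,a) ∇_θ π_θ(a|s). -/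
open scoped BigOperators

noncomputable section

section PGAux

open Matrix ContinuousLinearMap

attribute [local instance] Matrix.linftyOpNormedRing Matrix.linftyOpNormedAlgebra

variable {S A : Type*} [Fintype S] [Fintype A] [DecidableEq S] [DecidableEq A]

/-- State-action transition matrix of a policy. -/
def pgM (P : S → A → S → ℝ) (p : S → A → ℝ) : Matrix (S × A) (S × A) ℝ :=
  Matrix.of fun x y => P x.1 x.2 y.1 * p y.1 y.2

/-- Initial state-action distribution. -/
def pgNu (q : S → ℝ) (p : S → A → ℝ) : S × A → ℝ := fun x => q x.1 * p x.1 x.2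

/-- Discounted transition kernel as a matrix. -/
def pgB (P : S → A → S → ℝ) (γ : ℝ) (p : S → A → ℝ) : Matrix (S × A) (S × A) ℝ :=
  Matrix.of fun x y => betaDisc P p γ x.1 x.2 y.1 y.2

variable {P : S → A → S → ℝ} {q : S → ℝ} {γ : ℝ} {p : S → A → ℝ}

lemma betaK_pair_zero (x y : S × A) :
    betaK P p 0 x.1 x.2 y.1 y.2 = (1 : Matrix (S × A) (S × A) ℝ) x y := by
  simp [betaK, Matrix.one_apply, Prod.ext_iff]

lemma betaK_pair_succ (k : ℕ) (x y : S × A) :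
    betaK P p (k + 1) x.1 x.2 y.1 y.2 =
      ∑ z : S × A, pgM P p x z * betaK P p k z.1 z.2 y.1 y.2 := by
  rw [Fintype.sum_prod_type]
  rfl

lemma betaK_nonneg (hP : ∀ s a s', 0 ≤ P s a s') (hp : ∀ s a, 0 ≤ p s a) :
    ∀ (k : ℕ) (s : S) (a : A) (s' : S) (a' : A), 0 ≤ betaK P p k s a s' a'
  | 0, s, a, s', a' => by simp only [betaK]; split <;> norm_num
  | (k+1), s, a, s', a' => by
      simp only [betaK]
      refine Finset.sum_nonneg fun s'' _ => Finset.sum_nonneg fun a'' _ => ?_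
      exact mul_nonneg (mul_nonneg (hP _ _ _) (hp _ _)) (betaK_nonneg hP hp k _ _ _ _)

lemma pgM_nonneg (hP : ∀ s a s', 0 ≤ P s a s') (hp : ∀ s a, 0 ≤ p s a) (x y : S × A) :
    0 ≤ pgM P p x y := mul_nonneg (hP _ _ _) (hp _ _)

lemma pgM_rowsum (hP1 : ∀ s a, ∑ s', P s a s' = 1) (hp1 : ∀ s, ∑ a, p s a = 1) (x : S × A) :
    ∑ y : S × A, pgM P p x y = 1 := by
  rw [Fintype.sum_prod_type]
  simp only [pgM, Matrix.of_apply]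
  simp_rw [← Finset.mul_sum, hp1, mul_one]
  exact hP1 _ _

lemma betaK_sum_one (hP : ∀ s a s', 0 ≤ P s a s') (hP1 : ∀ s a, ∑ s', P s a s' = 1)
    (hp : ∀ s a, 0 ≤ p s a) (hp1 : ∀ s, ∑ a, p s a = 1) :
    ∀ (k : ℕ) (x : S × A), ∑ y : S × A, betaK P p k x.1 x.2 y.1 y.2 = 1
  | 0, x => by
      simp only [betaK_pair_zero, Matrix.one_apply]
      simp
  | (k+1), x => by
      simp only [betaK_pair_succ]
      rw [Finset.sum_comm]
      simp_rw [← Finset.mul_sum]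
      calc ∑ z : S × A, pgM P p x z * ∑ y : S × A, betaK P p k z.1 z.2 y.1 y.2
          = ∑ z : S × A, pgM P p x z := by
            refine Finset.sum_congr rfl fun z _ => ?_
            rw [betaK_sum_one hP hP1 hp hp1 k z, mul_one]
        _ = 1 := pgM_rowsum hP1 hp1 x

lemma betaK_le_one (hP : ∀ s a s', 0 ≤ P s a s') (hP1 : ∀ s a, ∑ s', P s a s' = 1)
    (hp : ∀ s a, 0 ≤ p s a) (hp1 : ∀ s, ∑ a, p s a = 1) (k : ℕ) (x y : S × A) :
    betaK P p k x.1 x.2 y.1 y.2 ≤ 1 := by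
  have h := Finset.single_le_sum
    (f := fun y' : S × A => betaK P p k x.1 x.2 y'.1 y'.2)
    (fun i _ => betaK_nonneg hP hp k _ _ _ _) (Finset.mem_univ y)
  rw [betaK_sum_one hP hP1 hp hp1 k x] at h
  exact h

lemma summable_beta (hP : ∀ s a s', 0 ≤ P s a s') (hP1 : ∀ s a, ∑ s', P s a s' = 1)
    (hp : ∀ s a, 0 ≤ p s a) (hp1 : ∀ s, ∑ a, p s a = 1)
    (hγ0 : 0 ≤ γ) (hγ1 : γ < 1) (x y : S × A) :
    Summable fun k : ℕ => γ ^ k * betaK P p k x.1 x.2 y.1 y.2 := by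
  refine Summable.of_nonneg_of_le
    (fun k => mul_nonneg (pow_nonneg hγ0 k) (betaK_nonneg hP hp k _ _ _ _))
    (fun k => ?_) (summable_geometric_of_lt_one hγ0 hγ1)
  exact mul_le_of_le_one_right (pow_nonneg hγ0 k) (betaK_le_one hP hP1 hp hp1 k x y)

end PGAux

section PGAux2

open Matrix ContinuousLinearMap

set_option linter.unusedSectionVars false

attribute [local instance] Matrix.linftyOpNormedRing Matrix.linftyOpNormedAlgebra

variable {S A : Type*} [Fintype S] [Fintype A] [DecidableEq S] [DecidableEq A]
variable {P : S → A → S → ℝ} {q : S → ℝ} {γ : ℝ} {p : S → A → ℝ}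

lemma stepDist_pair_succ (n : ℕ) (y : S × A) :
    stepDist P p q (n + 1) y.1 y.2 =
      ∑ z : S × A, stepDist P p q n z.1 z.2 * pgM P p z y := by
  show (∑ s, ∑ a, stepDist P p q n s a * P s a y.1) * p y.1 y.2 = _
  rw [Fintype.sum_prod_type]
  rw [Finset.sum_mul]
  refine Finset.sum_congr rfl fun s _ => ?_
  rw [Finset.sum_mul]
  refine Finset.sum_congr rfl fun a _ => ?_
  simp [pgM, mul_assoc]

lemma stepDist_nonneg (hP : ∀ s a s', 0 ≤ P s a s') (hp : ∀ s a, 0 ≤ p s a)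
    (hq : ∀ s, 0 ≤ q s) :
    ∀ (n : ℕ) (s : S) (a : A), 0 ≤ stepDist P p q n s a
  | 0, s, a => mul_nonneg (hq s) (hp s a)
  | (n+1), s, a => by
      show 0 ≤ (∑ s', ∑ a', stepDist P p q n s' a' * P s' a' s) * p s a
      refine mul_nonneg (Finset.sum_nonneg fun s' _ => Finset.sum_nonneg fun a' _ => ?_) (hp s a)
      exact mul_nonneg (stepDist_nonneg hP hp hq n s' a') (hP _ _ _)

lemma stepDist_sum_one (hP : ∀ s a s', 0 ≤ P s a s') (hP1 : ∀ s a, ∑ s', P s a s' = 1)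
    (hp : ∀ s a, 0 ≤ p s a) (hp1 : ∀ s, ∑ a, p s a = 1)
    (hq : ∀ s, 0 ≤ q s) (hq1 : ∑ s, q s = 1) :
    ∀ n : ℕ, ∑ x : S × A, stepDist P p q n x.1 x.2 = 1
  | 0 => by
      rw [Fintype.sum_prod_type]
      show ∑ s, ∑ a, q s * p s a = 1
      simp_rw [← Finset.mul_sum, hp1, mul_one]
      exact hq1
  | (n+1) => by
      simp_rw [stepDist_pair_succ]
      rw [Finset.sum_comm]
      simp_rw [← Finset.mul_sum, pgM_rowsum hP1 hp1, mul_one]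
      exact stepDist_sum_one hP hP1 hp hp1 hq hq1 n

lemma stepDist_le_one (hP : ∀ s a s', 0 ≤ P s a s') (hP1 : ∀ s a, ∑ s', P s a s' = 1)
    (hp : ∀ s a, 0 ≤ p s a) (hp1 : ∀ s, ∑ a, p s a = 1)
    (hq : ∀ s, 0 ≤ q s) (hq1 : ∑ s, q s = 1) (n : ℕ) (x : S × A) :
    stepDist P p q n x.1 x.2 ≤ 1 := by
  have h := Finset.single_le_sum
    (f := fun x' : S × A => stepDist P p q n x'.1 x'.2)
    (fun i _ => stepDist_nonneg hP hp hq n _ _) (Finset.mem_univ x)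
  rw [stepDist_sum_one hP hP1 hp hp1 hq hq1 n] at h
  exact h

lemma summable_step (hP : ∀ s a s', 0 ≤ P s a s') (hP1 : ∀ s a, ∑ s', P s a s' = 1)
    (hp : ∀ s a, 0 ≤ p s a) (hp1 : ∀ s, ∑ a, p s a = 1)
    (hq : ∀ s, 0 ≤ q s) (hq1 : ∑ s, q s = 1)
    (hγ0 : 0 ≤ γ) (hγ1 : γ < 1) (x : S × A) :
    Summable fun n : ℕ => γ ^ n * stepDist P p q n x.1 x.2 := by
  refine Summable.of_nonneg_of_le
    (fun n => mul_nonneg (pow_nonneg hγ0 n) (stepDist_nonneg hP hp hq n _ _))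
    (fun n => ?_) (summable_geometric_of_lt_one hγ0 hγ1)
  exact mul_le_of_le_one_right (pow_nonneg hγ0 n)
    (stepDist_le_one hP hP1 hp hp1 hq hq1 n x)

end PGAux2

section PGAux3

open Matrix ContinuousLinearMap

set_option linter.unusedSectionVars false

attribute [local instance] Matrix.linftyOpNormedRing Matrix.linftyOpNormedAlgebra

variable {S A : Type*} [Fintype S] [Fintype A] [DecidableEq S] [DecidableEq A]
variable {P : S → A → S → ℝ} {q : S → ℝ} {γ : ℝ} {p : S → A → ℝ}

lemma one_sub_mul_B (hP : ∀ s a s', 0 ≤ P s a s') (hP1 : ∀ s a, ∑ s', P s a s' = 1)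
    (hp : ∀ s a, 0 ≤ p s a) (hp1 : ∀ s, ∑ a, p s a = 1)
    (hγ0 : 0 ≤ γ) (hγ1 : γ < 1) :
    ((1 : Matrix (S × A) (S × A) ℝ) - γ • pgM P p) * pgB P γ p = 1 := by
  ext x y
  rw [Matrix.mul_apply]
  have hone : ∑ z : S × A, (1 : Matrix (S × A) (S × A) ℝ) x z * pgB P γ p z y
      = pgB P γ p x y := by
    simp [Matrix.one_apply, Finset.sum_ite_eq]
  have key : ∑ z : S × A, (γ • pgM P p) x z * pgB P γ p z y
      = pgB P γ p x y - (1 : Matrix (S × A) (S × A) ℝ) x y := by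
    have hsum : ∀ z : S × A,
        (γ • pgM P p) x z * pgB P γ p z y
          = ∑' k : ℕ, γ * (pgM P p x z * (γ ^ k * betaK P p k z.1 z.2 y.1 y.2)) := by
      intro z
      have : (γ • pgM P p) x z * pgB P γ p z y
          = (γ * pgM P p x z) * ∑' k : ℕ, γ ^ k * betaK P p k z.1 z.2 y.1 y.2 := rfl
      rw [this, ← tsum_mul_left]
      exact tsum_congr fun k => by ring
    calc ∑ z : S × A, (γ • pgM P p) x z * pgB P γ p z y
        = ∑ z : S × A, ∑' k : ℕ,
            γ * (pgM P p x z * (γ ^ k * betaK P p k z.1 z.2 y.1 y.2)) := by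
          exact Finset.sum_congr rfl fun z _ => hsum z
      _ = ∑' k : ℕ, ∑ z : S × A,
            γ * (pgM P p x z * (γ ^ k * betaK P p k z.1 z.2 y.1 y.2)) := by
          refine (Summable.tsum_finsetSum fun z _ => ?_).symm
          exact (((summable_beta hP hP1 hp hp1 hγ0 hγ1 z y).mul_left
            (pgM P p x z)).mul_left γ)
      _ = ∑' k : ℕ, γ ^ (k + 1) * betaK P p (k + 1) x.1 x.2 y.1 y.2 := by
          refine tsum_congr fun k => ?_
          rw [betaK_pair_succ]
          rw [Finset.mul_sum]
          refine Finset.sum_congr rfl fun z _ => ?_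
          ring
      _ = pgB P γ p x y - (1 : Matrix (S × A) (S × A) ℝ) x y := by
          have hs := summable_beta hP hP1 hp hp1 hγ0 hγ1 x y
          have h0 := Summable.tsum_eq_zero_add hs
          have : pgB P γ p x y
              = γ ^ 0 * betaK P p 0 x.1 x.2 y.1 y.2
                + ∑' k : ℕ, γ ^ (k + 1) * betaK P p (k + 1) x.1 x.2 y.1 y.2 := h0
          rw [this, pow_zero, one_mul, betaK_pair_zero]
          ring
  simp_rw [Matrix.sub_apply, sub_mul, Finset.sum_sub_distrib]
  rw [hone, key]
  ring

end PGAux3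

section PGAux4

open Matrix ContinuousLinearMap

set_option linter.unusedSectionVars false

attribute [local instance] Matrix.linftyOpNormedRing Matrix.linftyOpNormedAlgebra

variable {S A : Type*} [Fintype S] [Fintype A] [DecidableEq S] [DecidableEq A]
variable {P : S → A → S → ℝ} {q : S → ℝ} {γ : ℝ} {p : S → A → ℝ}

lemma B_mul_one_sub (hP : ∀ s a s', 0 ≤ P s a s') (hP1 : ∀ s a, ∑ s', P s a s' = 1)
    (hp : ∀ s a, 0 ≤ p s a) (hp1 : ∀ s, ∑ a, p s a = 1)
    (hγ0 : 0 ≤ γ) (hγ1 : γ < 1) :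
    pgB P γ p * ((1 : Matrix (S × A) (S × A) ℝ) - γ • pgM P p) = 1 :=
  mul_eq_one_comm.mp (one_sub_mul_B hP hP1 hp hp1 hγ0 hγ1)

/-- Occupancy flow equation. -/
lemma occ_flow (hP : ∀ s a s', 0 ≤ P s a s') (hP1 : ∀ s a, ∑ s', P s a s' = 1)
    (hp : ∀ s a, 0 ≤ p s a) (hp1 : ∀ s, ∑ a, p s a = 1)
    (hq : ∀ s, 0 ≤ q s) (hq1 : ∑ s, q s = 1)
    (hγ0 : 0 ≤ γ) (hγ1 : γ < 1) (x : S × A) :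
    occ P p q γ x.1 x.2
      = pgNu q p x + γ * ∑ z : S × A, occ P p q γ z.1 z.2 * pgM P p z x := by
  have hs := summable_step (q := q) hP hP1 hp hp1 hq hq1 hγ0 hγ1 x
  have h0 : occ P p q γ x.1 x.2
      = γ ^ 0 * stepDist P p q 0 x.1 x.2
        + ∑' n : ℕ, γ ^ (n + 1) * stepDist P p q (n + 1) x.1 x.2 :=
    Summable.tsum_eq_zero_add hs
  rw [h0, pow_zero, one_mul]
  have h1 : (∑' n : ℕ, γ ^ (n + 1) * stepDist P p q (n + 1) x.1 x.2)
      = γ * ∑ z : S × A, occ P p q γ z.1 z.2 * pgM P p z x := by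
    calc (∑' n : ℕ, γ ^ (n + 1) * stepDist P p q (n + 1) x.1 x.2)
        = ∑' n : ℕ, ∑ z : S × A,
            γ * (pgM P p z x * (γ ^ n * stepDist P p q n z.1 z.2)) := by
          refine tsum_congr fun n => ?_
          rw [stepDist_pair_succ, Finset.mul_sum]
          exact Finset.sum_congr rfl fun z _ => by ring
      _ = ∑ z : S × A, ∑' n : ℕ,
            γ * (pgM P p z x * (γ ^ n * stepDist P p q n z.1 z.2)) := by
          refine Summable.tsum_finsetSum fun z _ => ?_
          exact ((summable_step hP hP1 hp hp1 hq hq1 hγ0 hγ1 z).mul_left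
            (pgM P p z x)).mul_left γ
      _ = γ * ∑ z : S × A, occ P p q γ z.1 z.2 * pgM P p z x := by
          rw [Finset.mul_sum]
          refine Finset.sum_congr rfl fun z _ => ?_
          rw [tsum_mul_left, tsum_mul_left]
          show γ * (pgM P p z x * occ P p q γ z.1 z.2) = _
          ring
  rw [h1]
  rfl

/-- The occupancy measure solves the linear system. -/
lemma occ_vecMul (hP : ∀ s a s', 0 ≤ P s a s') (hP1 : ∀ s a, ∑ s', P s a s' = 1)
    (hp : ∀ s a, 0 ≤ p s a) (hp1 : ∀ s, ∑ a, p s a = 1)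
    (hq : ∀ s, 0 ≤ q s) (hq1 : ∑ s, q s = 1)
    (hγ0 : 0 ≤ γ) (hγ1 : γ < 1) :
    (fun x : S × A => occ P p q γ x.1 x.2) ᵥ*
        ((1 : Matrix (S × A) (S × A) ℝ) - γ • pgM P p) = pgNu q p := by
  funext y
  show ∑ x : S × A, occ P p q γ x.1 x.2 *
      ((1 : Matrix (S × A) (S × A) ℝ) - γ • pgM P p) x y = pgNu q p y
  simp_rw [Matrix.sub_apply, mul_sub, Finset.sum_sub_distrib]
  have hone : ∑ x : S × A, occ P p q γ x.1 x.2 * (1 : Matrix (S × A) (S × A) ℝ) x y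
      = occ P p q γ y.1 y.2 := by
    simp [Matrix.one_apply, Finset.sum_ite_eq]
  have hsm : ∑ x : S × A, occ P p q γ x.1 x.2 * (γ • pgM P p) x y
      = γ * ∑ z : S × A, occ P p q γ z.1 z.2 * pgM P p z y := by
    rw [Finset.mul_sum]
    refine Finset.sum_congr rfl fun z _ => ?_
    simp [Matrix.smul_apply]
    ring
  rw [hone, hsm]
  have := occ_flow hP hP1 hp hp1 hq hq1 hγ0 hγ1 y
  linarith [this]

lemma occ_eq_nuB (hP : ∀ s a s', 0 ≤ P s a s') (hP1 : ∀ s a, ∑ s', P s a s' = 1)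
    (hp : ∀ s a, 0 ≤ p s a) (hp1 : ∀ s, ∑ a, p s a = 1)
    (hq : ∀ s, 0 ≤ q s) (hq1 : ∑ s, q s = 1)
    (hγ0 : 0 ≤ γ) (hγ1 : γ < 1) :
    (fun x : S × A => occ P p q γ x.1 x.2) = pgNu q p ᵥ* pgB P γ p := by
  have h1 := one_sub_mul_B hP hP1 hp hp1 hγ0 hγ1
  calc (fun x : S × A => occ P p q γ x.1 x.2)
      = (fun x : S × A => occ P p q γ x.1 x.2) ᵥ* (1 : Matrix (S × A) (S × A) ℝ) := by
        rw [Matrix.vecMul_one]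
    _ = (fun x : S × A => occ P p q γ x.1 x.2) ᵥ*
          (((1 : Matrix (S × A) (S × A) ℝ) - γ • pgM P p) * pgB P γ p) := by rw [h1]
    _ = ((fun x : S × A => occ P p q γ x.1 x.2) ᵥ*
          ((1 : Matrix (S × A) (S × A) ℝ) - γ • pgM P p)) ᵥ* pgB P γ p := by
        rw [Matrix.vecMul_vecMul]
    _ = pgNu q p ᵥ* pgB P γ p := by
        rw [occ_vecMul hP hP1 hp hp1 hq hq1 hγ0 hγ1]

lemma occ_entry_sum (hP : ∀ s a s', 0 ≤ P s a s') (hP1 : ∀ s a, ∑ s', P s a s' = 1)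
    (hp : ∀ s a, 0 ≤ p s a) (hp1 : ∀ s, ∑ a, p s a = 1)
    (hq : ∀ s, 0 ≤ q s) (hq1 : ∑ s, q s = 1)
    (hγ0 : 0 ≤ γ) (hγ1 : γ < 1) (x : S × A) :
    occ P p q γ x.1 x.2 = ∑ z : S × A, pgNu q p z * pgB P γ p z x := by
  have := congrFun (occ_eq_nuB (q := q) hP hP1 hp hp1 hq hq1 hγ0 hγ1) x
  rw [this]
  rfl

lemma Qval_eq (hP : ∀ s a s', 0 ≤ P s a s') (hP1 : ∀ s a, ∑ s', P s a s' = 1)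
    (hp : ∀ s a, 0 ≤ p s a) (hp1 : ∀ s, ∑ a, p s a = 1)
    (hγ0 : 0 ≤ γ) (hγ1 : γ < 1) (R : S → A → ℝ) (x : S × A) :
    Qval P p γ R x.1 x.2 = ∑ y : S × A, pgB P γ p x y * R y.1 y.2 := by
  calc Qval P p γ R x.1 x.2
      = ∑' n : ℕ, ∑ y : S × A, γ ^ n * betaK P p n x.1 x.2 y.1 y.2 * R y.1 y.2 := by
        refine tsum_congr fun n => ?_
        show γ ^ n * ∑ s', ∑ a', betaK P p n x.1 x.2 s' a' * R s' a' = _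
        rw [Fintype.sum_prod_type]
        rw [Finset.mul_sum]
        refine Finset.sum_congr rfl fun s' _ => ?_
        rw [Finset.mul_sum]
        exact Finset.sum_congr rfl fun a' _ => by ring
    _ = ∑ y : S × A, ∑' n : ℕ, γ ^ n * betaK P p n x.1 x.2 y.1 y.2 * R y.1 y.2 := by
        refine Summable.tsum_finsetSum fun y _ => ?_
        exact (summable_beta hP hP1 hp hp1 hγ0 hγ1 x y).mul_right (R y.1 y.2)
    _ = ∑ y : S × A, pgB P γ p x y * R y.1 y.2 := by
        refine Finset.sum_congr rfl fun y _ => ?_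
        rw [tsum_mul_right]
        rfl

/-- Bellman flow equation for the state occupancy. -/
lemma occ_row (hP : ∀ s a s', 0 ≤ P s a s') (hP1 : ∀ s a, ∑ s', P s a s' = 1)
    (hp : ∀ s a, 0 ≤ p s a) (hp1 : ∀ s, ∑ a, p s a = 1)
    (hq : ∀ s, 0 ≤ q s) (hq1 : ∑ s, q s = 1)
    (hγ0 : 0 ≤ γ) (hγ1 : γ < 1) (s : S) :
    ∑ b, occ P p q γ s b
      = q s + γ * ∑ z : S × A, occ P p q γ z.1 z.2 * P z.1 z.2 s := by
  have hflow : ∀ b : A, occ P p q γ s b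
      = q s * p s b + γ * ∑ z : S × A, occ P p q γ z.1 z.2 * (P z.1 z.2 s * p s b) :=
    fun b => occ_flow hP hP1 hp hp1 hq hq1 hγ0 hγ1 (s, b)
  calc ∑ b, occ P p q γ s b
      = ∑ b, (q s * p s b
          + γ * ∑ z : S × A, occ P p q γ z.1 z.2 * (P z.1 z.2 s * p s b)) :=
        Finset.sum_congr rfl fun b _ => hflow b
    _ = q s + γ * ∑ z : S × A, occ P p q γ z.1 z.2 * P z.1 z.2 s := by
        rw [Finset.sum_add_distrib]
        congr 1
        · rw [← Finset.mul_sum, hp1 s, mul_one]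
        · rw [← Finset.mul_sum]
          congr 1
          rw [Finset.sum_comm]
          refine Finset.sum_congr rfl fun z _ => ?_
          have hb : ∀ b : A, occ P p q γ z.1 z.2 * (P z.1 z.2 s * p s b)
              = (occ P p q γ z.1 z.2 * P z.1 z.2 s) * p s b := fun b => by ring
          simp_rw [hb]
          rw [← Finset.mul_sum, hp1 s, mul_one]

end PGAux4


section PGMain


open Matrix ContinuousLinearMap

attribute [local instance] Matrix.linftyOpNormedRing Matrix.linftyOpNormedAlgebra

/-- Policy Gradient Theorem for RL with general utilities: with the intrinsic
reward `R_π = ∇f(μ^π)`, the gradient of `θ ↦ f(μ^{π_θ})` is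
`∑_{s,a} μ^{π_θ}(s) Q^{π_θ}_{R_π}(s,a) ∇_θ π_θ(a|s)`. -/
theorem policy_gradient_general_utilities {S A : Type*} [Fintype S] [Fintype A]
    [DecidableEq S] [DecidableEq A] {d : ℕ}
    (P : S → A → S → ℝ) (q : S → ℝ) (γ : ℝ)
    (pol : (Fin d → ℝ) → S → A → ℝ) (θ : Fin d → ℝ)
    (f : (S × A → ℝ) → ℝ)
    (hP : ∀ s a s', 0 ≤ P s a s') (hP1 : ∀ s a, ∑ s', P s a s' = 1)
    (hpol : ∀ θ' s a, 0 ≤ pol θ' s a) (hpol1 : ∀ θ' s, ∑ a, pol θ' s a = 1)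
    (hq : ∀ s, 0 ≤ q s) (hq1 : ∑ s, q s = 1)
    (hγ0 : 0 ≤ γ) (hγ1 : γ < 1)
    (hdiff : ∀ s a, DifferentiableAt ℝ (fun θ' => pol θ' s a) θ)
    (hf : DifferentiableAt ℝ f (fun p : S × A => occ P (pol θ) q γ p.1 p.2)) :
    fderiv ℝ (fun θ' => f (fun p : S × A => occ P (pol θ') q γ p.1 p.2)) θ =
      ∑ s, ∑ a,
        ((∑ b, occ P (pol θ) q γ s b) *
            Qval P (pol θ) γ
              (fun s' a' =>
                fderiv ℝ f (fun p : S × A => occ P (pol θ) q γ p.1 p.2)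
                  (Pi.single (s', a') 1)) s a) •
          fderiv ℝ (fun θ' => pol θ' s a) θ := by
  classical
  -- Ring inverse description of the discounted kernel, for every parameter
  have hRinv : ∀ θ', Ring.inverse
      ((1 : Matrix (S × A) (S × A) ℝ) - γ • pgM P (pol θ')) = pgB P γ (pol θ') := by
    intro θ'
    have h1 := one_sub_mul_B (P := P) (p := pol θ') hP hP1 (hpol θ') (hpol1 θ') hγ0 hγ1
    have h2 := B_mul_one_sub (P := P) (p := pol θ') hP hP1 (hpol θ') (hpol1 θ') hγ0 hγ1
    exact Ring.inverse_unit ⟨_, pgB P γ (pol θ'), h1, h2⟩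
  -- the smooth model function Ψ
  set Ψ : (S → A → ℝ) → (S × A → ℝ) := fun p x =>
    ∑ y : S × A, pgNu q p y *
      Ring.inverse ((1 : Matrix (S × A) (S × A) ℝ) - γ • pgM P p) y x with hΨdef
  have hfun : ∀ θ', (fun x : S × A => occ P (pol θ') q γ x.1 x.2) = Ψ (pol θ') := by
    intro θ'
    rw [occ_eq_nuB hP hP1 (hpol θ') (hpol1 θ') hq hq1 hγ0 hγ1]
    funext x
    rw [hΨdef]
    simp only [hRinv θ']
    rfl
  -- units
  have hB1 := one_sub_mul_B (P := P) (p := pol θ) hP hP1 (hpol θ) (hpol1 θ) hγ0 hγ1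
  have hB2 := B_mul_one_sub (P := P) (p := pol θ) hP hP1 (hpol θ) (hpol1 θ) hγ0 hγ1
  let u : (Matrix (S × A) (S × A) ℝ)ˣ :=
    ⟨(1 : Matrix (S × A) (S × A) ℝ) - γ • pgM P (pol θ), pgB P γ (pol θ), hB1, hB2⟩
  -- continuous linear maps
  let mL : (S → A → ℝ) →L[ℝ] Matrix (S × A) (S × A) ℝ :=
    LinearMap.toContinuousLinearMap
      { toFun := fun p => pgM P p
        map_add' := fun p p' => by
          ext x y
          simp [pgM, mul_add]
        map_smul' := fun c p => by
          ext x y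
          simp [pgM, Matrix.smul_apply, smul_eq_mul]
          ring }
  let E : (S × A) → (S × A) → (Matrix (S × A) (S × A) ℝ →L[ℝ] ℝ) := fun y x =>
    LinearMap.toContinuousLinearMap (Matrix.entryLinearMap ℝ ℝ y x)
  let evalC : (S × A) → ((S → A → ℝ) →L[ℝ] ℝ) := fun y =>
    (ContinuousLinearMap.proj (R := ℝ) (φ := fun _ : A => ℝ) y.2).comp
      (ContinuousLinearMap.proj (R := ℝ) (φ := fun _ : S => A → ℝ) y.1)
  let DA : (S → A → ℝ) →L[ℝ] Matrix (S × A) (S × A) ℝ := 0 - γ • mL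
  let Dinv : (S → A → ℝ) →L[ℝ] Matrix (S × A) (S × A) ℝ :=
    (-(ContinuousLinearMap.mulLeftRight ℝ (Matrix (S × A) (S × A) ℝ)
        (pgB P γ (pol θ)) (pgB P γ (pol θ)))).comp DA
  -- derivative of the affine map p ↦ 1 - γ • M(p)
  have hA : HasFDerivAt
      (fun p : S → A → ℝ => (1 : Matrix (S × A) (S × A) ℝ) - γ • pgM P p) DA (pol θ) := by
    have h1 : HasFDerivAt (fun _ : S → A → ℝ => (1 : Matrix (S × A) (S × A) ℝ))
        (0 : (S → A → ℝ) →L[ℝ] Matrix (S × A) (S × A) ℝ) (pol θ) := hasFDerivAt_const _ _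
    have h2 : HasFDerivAt (fun p : S → A → ℝ => γ • pgM P p) (γ • mL) (pol θ) :=
      mL.hasFDerivAt.const_smul γ
    exact h1.sub h2
  -- derivative of the matrix inverse
  have hinv : HasFDerivAt
      (fun p : S → A → ℝ =>
        Ring.inverse ((1 : Matrix (S × A) (S × A) ℝ) - γ • pgM P p)) Dinv (pol θ) := by
    have h := hasFDerivAt_ringInverse (𝕜 := ℝ) u
    exact h.comp (pol θ) hA
  -- coordinatewise derivative of Ψ
  let D : (S × A) → ((S → A → ℝ) →L[ℝ] ℝ) := fun x =>
    ∑ y : S × A,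
      ((q y.1 * pol θ y.1 y.2) • ((E y x).comp Dinv)
        + (Ring.inverse ((1 : Matrix (S × A) (S × A) ℝ) - γ • pgM P (pol θ)) y x) •
            ((q y.1) • evalC y))
  have hcoord : ∀ x : S × A, HasFDerivAt (fun p : S → A → ℝ =>
      ∑ y : S × A, pgNu q p y *
        Ring.inverse ((1 : Matrix (S × A) (S × A) ℝ) - γ • pgM P p) y x) (D x) (pol θ) := by
    intro x
    refine HasFDerivAt.fun_sum fun y _ => ?_
    have hbase : HasFDerivAt (fun p : S → A → ℝ => p y.1 y.2) (evalC y) (pol θ) :=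
      by have h := (hasFDerivAt_apply (𝕜 := ℝ) y.2 (pol θ y.1)).comp (pol θ) (hasFDerivAt_apply (𝕜 := ℝ) y.1 (pol θ)); exact h
    have hν : HasFDerivAt (fun p : S → A → ℝ => q y.1 * p y.1 y.2)
        ((q y.1) • evalC y) (pol θ) := hbase.const_mul (q y.1)
    have hE : HasFDerivAt (fun p : S → A → ℝ =>
        Ring.inverse ((1 : Matrix (S × A) (S × A) ℝ) - γ • pgM P p) y x)
        ((E y x).comp Dinv) (pol θ) := ((E y x).hasFDerivAt).comp (pol θ) hinv
    exact hν.mul hE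
  have hΨd : HasFDerivAt Ψ (ContinuousLinearMap.pi D) (pol θ) :=
    hasFDerivAt_pi.2 hcoord
  -- derivative of the policy map
  let Dpol : (Fin d → ℝ) →L[ℝ] (S → A → ℝ) :=
    ContinuousLinearMap.pi fun s => ContinuousLinearMap.pi fun a =>
      fderiv ℝ (fun θ' => pol θ' s a) θ
  have hpolD : HasFDerivAt (fun θ' : Fin d → ℝ => pol θ') Dpol θ :=
    hasFDerivAt_pi.2 fun s => hasFDerivAt_pi.2 fun a => (hdiff s a).hasFDerivAt
  -- main composition
  rw [hfun θ] at hf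
  have hcomp : HasFDerivAt (fun θ' : Fin d → ℝ => f (Ψ (pol θ')))
      ((fderiv ℝ f (Ψ (pol θ))).comp ((ContinuousLinearMap.pi D).comp Dpol)) θ :=
    hf.hasFDerivAt.comp θ (hΨd.comp θ hpolD)
  have hgoalfun : (fun θ' => f (fun p : S × A => occ P (pol θ') q γ p.1 p.2))
      = fun θ' => f (Ψ (pol θ')) := funext fun θ' => congrArg f (hfun θ')
  rw [hfun θ, hgoalfun, hcomp.fderiv]
  -- Endgame: show equality of the two continuous linear maps
  refine ContinuousLinearMap.ext fun v => ?_
  rw [ContinuousLinearMap.comp_apply, ContinuousLinearMap.comp_apply]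
  -- decomposition of the derivative of f along coordinates
  have hone : ∀ g : S × A → ℝ,
      fderiv ℝ f (Ψ (pol θ)) g
        = ∑ x : S × A, g x * fderiv ℝ f (Ψ (pol θ)) (Pi.single x 1) := by
    intro g
    have hg : g = ∑ x : S × A, g x • (Pi.single x 1 : S × A → ℝ) := by
      funext j
      rw [Finset.sum_apply]
      simp [Pi.single_apply]
    conv_lhs => rw [hg]
    rw [map_sum]
    simp_rw [_root_.map_smul, smul_eq_mul]
  -- application facts for the auxiliary continuous linear maps
  have hvapp : ∀ (g : S × A → ℝ) (M : Matrix (S × A) (S × A) ℝ) (x : S × A),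
      (g ᵥ* M) x = ∑ y : S × A, g y * M y x := fun g M x => rfl
  have hDpol : ∀ s a, Dpol v s a = fderiv ℝ (fun θ' => pol θ' s a) θ v := fun s a => rfl
  have hDAapp : DA (Dpol v) = -(γ • pgM P (Dpol v)) := by
    have : DA (Dpol v) = 0 - γ • mL (Dpol v) := rfl
    rw [this, zero_sub]
    rfl
  have hDinvw : Dinv (Dpol v)
      = pgB P γ (pol θ) * (γ • pgM P (Dpol v)) * pgB P γ (pol θ) := by
    have h0 : Dinv (Dpol v)
        = -(ContinuousLinearMap.mulLeftRight ℝ (Matrix (S × A) (S × A) ℝ)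
            (pgB P γ (pol θ)) (pgB P γ (pol θ))) (DA (Dpol v)) := rfl
    rw [h0, ContinuousLinearMap.mulLeftRight_apply, hDAapp, mul_neg, neg_mul, neg_neg]
  have hDxw : ∀ x : S × A, D x (Dpol v)
      = ∑ y : S × A,
          (pgNu q (pol θ) y *
              (pgB P γ (pol θ) * (γ • pgM P (Dpol v)) * pgB P γ (pol θ)) y x
            + pgB P γ (pol θ) y x * (q y.1 * Dpol v y.1 y.2)) := by
    intro x
    have h0 : D x (Dpol v) = ∑ y : S × A,
        ((q y.1 * pol θ y.1 y.2) • ((E y x).comp Dinv)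
          + (Ring.inverse ((1 : Matrix (S × A) (S × A) ℝ) - γ • pgM P (pol θ)) y x) •
              ((q y.1) • evalC y)) (Dpol v) := ContinuousLinearMap.sum_apply _ _ _
    rw [h0]
    refine Finset.sum_congr rfl fun y _ => ?_
    simp only [ContinuousLinearMap.add_apply, ContinuousLinearMap.smul_apply,
      ContinuousLinearMap.comp_apply, smul_eq_mul, hRinv θ]
    rw [hDinvw]
    rfl
  -- matrix-level simplification of the first part
  have hocc : pgNu q (pol θ) ᵥ* pgB P γ (pol θ)
      = fun x : S × A => occ P (pol θ) q γ x.1 x.2 :=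
    (occ_eq_nuB hP hP1 (hpol θ) (hpol1 θ) hq hq1 hγ0 hγ1).symm
  have hmatrix : pgNu q (pol θ) ᵥ* (pgB P γ (pol θ) * (γ • pgM P (Dpol v)) * pgB P γ (pol θ))
      = ((fun x : S × A => occ P (pol θ) q γ x.1 x.2) ᵥ* (γ • pgM P (Dpol v)))
          ᵥ* pgB P γ (pol θ) := by
    rw [mul_assoc, ← Matrix.vecMul_vecMul, hocc, ← Matrix.vecMul_vecMul]
  -- swap lemma
  have hswap : ∀ g : S × A → ℝ,
      ∑ x : S × A, (g ᵥ* pgB P γ (pol θ)) x * fderiv ℝ f (Ψ (pol θ)) (Pi.single x 1)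
        = ∑ y : S × A, g y *
            ∑ x : S × A, pgB P γ (pol θ) y x * fderiv ℝ f (Ψ (pol θ)) (Pi.single x 1) := by
    intro g
    calc ∑ x : S × A, (g ᵥ* pgB P γ (pol θ)) x * fderiv ℝ f (Ψ (pol θ)) (Pi.single x 1)
        = ∑ x : S × A, ∑ y : S × A,
            g y * (pgB P γ (pol θ) y x * fderiv ℝ f (Ψ (pol θ)) (Pi.single x 1)) := by
          refine Finset.sum_congr rfl fun x _ => ?_
          rw [hvapp, Finset.sum_mul]
          exact Finset.sum_congr rfl fun y _ => by ring
      _ = ∑ y : S × A, ∑ x : S × A,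
            g y * (pgB P γ (pol θ) y x * fderiv ℝ f (Ψ (pol θ)) (Pi.single x 1)) :=
          Finset.sum_comm
      _ = ∑ y : S × A, g y *
            ∑ x : S × A, pgB P γ (pol θ) y x * fderiv ℝ f (Ψ (pol θ)) (Pi.single x 1) := by
          refine Finset.sum_congr rfl fun y _ => ?_
          rw [Finset.mul_sum]
  -- compute the left-hand side
  have hLHS : fderiv ℝ f (Ψ (pol θ)) ((ContinuousLinearMap.pi D) (Dpol v))
      = ∑ y : S × A,
          ((q y.1 + γ * ∑ z : S × A, occ P (pol θ) q γ z.1 z.2 * P z.1 z.2 y.1)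
            * ∑ x : S × A, pgB P γ (pol θ) y x * fderiv ℝ f (Ψ (pol θ)) (Pi.single x 1))
            * Dpol v y.1 y.2 := by
    have hpiapp : (ContinuousLinearMap.pi D) (Dpol v) = fun x => D x (Dpol v) := by
      funext x
      rw [ContinuousLinearMap.pi_apply]
    rw [hpiapp, hone]
    calc ∑ x : S × A, D x (Dpol v) * fderiv ℝ f (Ψ (pol θ)) (Pi.single x 1)
        = ∑ x : S × A,
            ((((fun x' : S × A => occ P (pol θ) q γ x'.1 x'.2) ᵥ* (γ • pgM P (Dpol v)))
                + fun y : S × A => q y.1 * Dpol v y.1 y.2) ᵥ* pgB P γ (pol θ)) x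
              * fderiv ℝ f (Ψ (pol θ)) (Pi.single x 1) := by
          refine Finset.sum_congr rfl fun x _ => ?_
          congr 1
          rw [hDxw x, Finset.sum_add_distrib, Matrix.add_vecMul, Pi.add_apply, ← hmatrix,
            hvapp, hvapp]
          congr 1
          exact Finset.sum_congr rfl fun y _ => mul_comm _ _
      _ = ∑ y : S × A,
            (((fun x' : S × A => occ P (pol θ) q γ x'.1 x'.2) ᵥ* (γ • pgM P (Dpol v)))
                + fun y' : S × A => q y'.1 * Dpol v y'.1 y'.2) y *
              ∑ x : S × A, pgB P γ (pol θ) y x * fderiv ℝ f (Ψ (pol θ)) (Pi.single x 1) :=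
          hswap _
      _ = ∑ y : S × A,
            ((q y.1 + γ * ∑ z : S × A, occ P (pol θ) q γ z.1 z.2 * P z.1 z.2 y.1)
              * ∑ x : S × A, pgB P γ (pol θ) y x * fderiv ℝ f (Ψ (pol θ)) (Pi.single x 1))
              * Dpol v y.1 y.2 := by
          refine Finset.sum_congr rfl fun y _ => ?_
          have h1 : (((fun x' : S × A => occ P (pol θ) q γ x'.1 x'.2) ᵥ* (γ • pgM P (Dpol v)))
              + fun y' : S × A => q y'.1 * Dpol v y'.1 y'.2) y
              = (∑ z : S × A, occ P (pol θ) q γ z.1 z.2 *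
                  (γ * (P z.1 z.2 y.1 * Dpol v y.1 y.2))) + q y.1 * Dpol v y.1 y.2 := by
            rw [Pi.add_apply, hvapp]
            rfl
          rw [h1]
          have h2 : ∑ z : S × A, occ P (pol θ) q γ z.1 z.2 *
              (γ * (P z.1 z.2 y.1 * Dpol v y.1 y.2))
              = (γ * ∑ z : S × A, occ P (pol θ) q γ z.1 z.2 * P z.1 z.2 y.1)
                  * Dpol v y.1 y.2 := by
            rw [Finset.mul_sum, Finset.sum_mul]
            exact Finset.sum_congr rfl fun z _ => by ring
          rw [h2]
          ring
  rw [hLHS]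
  -- compute the right-hand side
  have hsumapp : (∑ s, ∑ a,
      ((∑ b, occ P (pol θ) q γ s b) *
          Qval P (pol θ) γ
            (fun s' a' => fderiv ℝ f (Ψ (pol θ)) (Pi.single (s', a') 1)) s a) •
        fderiv ℝ (fun θ' => pol θ' s a) θ) v
      = ∑ s, ∑ a,
        ((∑ b, occ P (pol θ) q γ s b) *
            Qval P (pol θ) γ
              (fun s' a' => fderiv ℝ f (Ψ (pol θ)) (Pi.single (s', a') 1)) s a) *
          fderiv ℝ (fun θ' => pol θ' s a) θ v := by
    rw [ContinuousLinearMap.sum_apply]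
    refine Finset.sum_congr rfl fun s _ => ?_
    rw [ContinuousLinearMap.sum_apply]
    refine Finset.sum_congr rfl fun a _ => ?_
    rw [ContinuousLinearMap.smul_apply, smul_eq_mul]
  rw [hsumapp]
  -- identify the coefficients
  have hQ : ∀ y : S × A,
      Qval P (pol θ) γ
          (fun s' a' => fderiv ℝ f (Ψ (pol θ)) (Pi.single (s', a') 1)) y.1 y.2
        = ∑ x : S × A, pgB P γ (pol θ) y x * fderiv ℝ f (Ψ (pol θ)) (Pi.single x 1) := by
    intro y
    have h := Qval_eq (P := P) (p := pol θ) hP hP1 (hpol θ) (hpol1 θ) hγ0 hγ1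
      (fun s' a' => fderiv ℝ f (Ψ (pol θ)) (Pi.single (s', a') 1)) y
    rw [h]
    all_goals exact Finset.sum_congr rfl fun x _ => by rw [Prod.mk.eta]
  have hrow : ∀ s : S, ∑ b, occ P (pol θ) q γ s b
      = q s + γ * ∑ z : S × A, occ P (pol θ) q γ z.1 z.2 * P z.1 z.2 s :=
    occ_row hP hP1 (hpol θ) (hpol1 θ) hq hq1 hγ0 hγ1
  rw [Fintype.sum_prod_type]
  refine Finset.sum_congr rfl fun s _ => Finset.sum_congr rfl fun a _ => ?_
  rw [hQ (s, a), hrow s, hDpol s a]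

end PGMain
end
end

section
/- (Policy gradient with compatible function approximation) Suppose g_w : S × A → ℝ satisfies (i) Σ_{s,a} μ^π(s) π(a|s) [Q^π(s,a) − g_w(s,a)] ∂g_w(s,a)/∂w = 0 and (ii) ∂g_w(s,a)/∂w = ∇_θ π(a|s) / π(a|s). Then the policy gradient ∇_θ f = Σ_{s,a} μ^π(s) Q^π(s,a) ∇_θ π(a|s) equals Σ_{s,a} μ^π(s) ∇_θ π(a|s) g_w(s,a). -/
open scoped BigOperators

noncomputable section

/-- Policy gradient with compatible function approximation: if the approximator
`g_w` satisfies the local-convergence condition and the compatibility condition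
`∂g_w/∂w = ∇_θ π(a|s) / π(a|s)`, then replacing `Q^π` by `g_w` in the policy
gradient leaves it unchanged. -/
theorem policy_gradient_function_approximation {S A : Type*} [Fintype S] [Fintype A]
    {d : ℕ}
    (μs : S → ℝ) (Q : S → A → ℝ)
    (pol : (Fin d → ℝ) → S → A → ℝ) (θ : Fin d → ℝ)
    (g : (Fin d → ℝ) → S → A → ℝ) (w : Fin d → ℝ)
    (hpolpos : ∀ s a, 0 < pol θ s a)
    (hcompat : ∀ s a,
      fderiv ℝ (fun w' => g w' s a) w =
        (pol θ s a)⁻¹ • fderiv ℝ (fun θ' => pol θ' s a) θ)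
    (hlocal : ∑ s, ∑ a,
        (μs s * pol θ s a * (Q s a - g w s a)) • fderiv ℝ (fun w' => g w' s a) w = 0) :
    ∑ s, ∑ a, (μs s * Q s a) • fderiv ℝ (fun θ' => pol θ' s a) θ =
      ∑ s, ∑ a, (μs s * g w s a) • fderiv ℝ (fun θ' => pol θ' s a) θ := by
  have h : ∀ s a, (μs s * pol θ s a * (Q s a - g w s a)) • fderiv ℝ (fun w' => g w' s a) w
      = (μs s * Q s a) • fderiv ℝ (fun θ' => pol θ' s a) θ -
        (μs s * g w s a) • fderiv ℝ (fun θ' => pol θ' s a) θ := by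
    intro s a
    rw [hcompat, smul_smul, ← sub_smul (μs s * Q s a) (μs s * g w s a) (fderiv ℝ (fun θ' => pol θ' s a) θ)]
    congr 1
    field_simp [(hpolpos s a).ne']
  simp only [h, Finset.sum_sub_distrib] at hlocal
  exact sub_eq_zero.mp hlocal
end
end
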